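/- Gould–Hopper special case: let p = q = 0 (so that γ_i = 1 for all i), let h be a real number, and set m = (−1)^k · h · k^k. Then for every n ∈ ℕ, A_n^{(k)}(m, x) equals the Gould–Hopper polynomial g_n^k(x,h) = ∑_{i=0}^{⌊n/k⌋} (n!/(i!(n−ki)!)) · h^i · x^{n−ki}, and for every real x the formal power series identity exp(xt + h t^k) = ∑_{n=0}^∞ g_n^k(x,h) · t^n/n! holds in ℝ[[t]], where exp(xt + h t^k) denotes the formal exponential of the polynomial x·t + h·t^k. -/

import Mathlib

open Finset

lemma coeff_xh_pow (x h : ℝ) (k j n : ℕ) :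
    PowerSeries.coeff n ((PowerSeries.C x * PowerSeries.X + PowerSeries.C h * PowerSeries.X ^ k) ^ j)
      = ∑ i ∈ range (j + 1), if k * i + (j - i) = n then (j.choose i : ℝ) * h ^ i * x ^ (j - i) else 0 := by
  rw [add_comm, add_pow, map_sum]
  refine Finset.sum_congr rfl fun i hi => ?_
  have e : (PowerSeries.C h * PowerSeries.X ^ k) ^ i * (PowerSeries.C x * PowerSeries.X) ^ (j - i)
        * (j.choose i : PowerSeries ℝ)
      = PowerSeries.C ((j.choose i : ℝ) * h ^ i * x ^ (j - i)) * PowerSeries.X ^ (k * i + (j - i)) := by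
    rw [show ((j.choose i : ℕ) : PowerSeries ℝ) = PowerSeries.C ((j.choose i : ℕ) : ℝ) by
      simp]
    simp only [mul_pow, ← map_pow, ← pow_mul, pow_add, mul_comm k i]
    simp only [map_mul]; ring
  rw [e, PowerSeries.coeff_C_mul, PowerSeries.coeff_X_pow]
  simp [eq_comm]


lemma exp_sum_eq (k : ℕ) (hk : 1 ≤ k) (h x : ℝ) (n : ℕ) :
    (∑ j ∈ Finset.range (n + 1),
      PowerSeries.coeff (R := ℝ) n ((PowerSeries.C x * PowerSeries.X + PowerSeries.C h * PowerSeries.X ^ k) ^ j)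
        / j.factorial)
    = ∑ i ∈ Finset.range (n / k + 1), h ^ i * x ^ (n - k * i) / (i.factorial * (n - k * i).factorial) := by
  have hkpos : 0 < k := hk
  simp only [coeff_xh_pow, Finset.sum_div]
  rw [Finset.sum_sigma']
  have hite : ∀ p : Σ _ : ℕ, ℕ, p ∈ (Finset.range (n+1)).sigma (fun j => Finset.range (j+1)) →
      (if k * p.2 + (p.1 - p.2) = n then (p.1.choose p.2 : ℝ) * h ^ p.2 * x ^ (p.1 - p.2) else 0) / p.1.factorial
      = if k * p.2 + (p.1 - p.2) = n then (p.1.choose p.2 : ℝ) * h ^ p.2 * x ^ (p.1 - p.2) / p.1.factorial else 0 := by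
    intro p _; split <;> simp
  rw [Finset.sum_congr rfl hite, ← Finset.sum_filter]
  refine Finset.sum_nbij' (fun p => p.2) (fun i => ⟨n - k * i + i, i⟩) ?_ ?_ ?_ ?_ ?_
  · intro p hp
    simp only [Finset.mem_filter, Finset.mem_sigma, Finset.mem_range] at hp ⊢
    obtain ⟨⟨h1, h2⟩, h3⟩ := hp
    have h5 : k * p.2 ≤ n := by omega
    have h4 : p.2 * k ≤ n := by rw [Nat.mul_comm]; exact h5
    have : p.2 ≤ n / k := Nat.le_div_iff_mul_le hkpos |>.2 h4
    omega
  · intro i hi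
    simp only [Finset.mem_range] at hi
    have hki : k * i ≤ n := by
      have h6 := (Nat.le_div_iff_mul_le hkpos).1 (by omega : i ≤ n / k)
      have h7 : i * k = k * i := Nat.mul_comm i k
      omega
    have hik : i ≤ k * i := Nat.le_mul_of_pos_left i hkpos
    simp only [Finset.mem_filter, Finset.mem_sigma, Finset.mem_range]
    refine ⟨⟨by omega, by omega⟩, by omega⟩
  · intro p hp
    simp only [Finset.mem_filter, Finset.mem_sigma, Finset.mem_range] at hp
    obtain ⟨⟨h1, h2⟩, h3⟩ := hp
    have hik : p.2 ≤ k * p.2 := Nat.le_mul_of_pos_left p.2 hkpos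
    have : n - k * p.2 + p.2 = p.1 := by omega
    exact Sigma.ext (by simpa using this) (by simp)
  · intro i hi; rfl
  · intro p hp
    simp only [Finset.mem_filter, Finset.mem_sigma, Finset.mem_range] at hp
    obtain ⟨⟨h1, h2⟩, h3⟩ := hp
    have hsub : p.1 - p.2 = n - k * p.2 := by omega
    have hcast : (p.1.choose p.2 : ℝ) = p.1.factorial / (p.2.factorial * (p.1 - p.2).factorial) :=
      Nat.cast_choose ℝ (by omega)
    rw [hcast, hsub]
    have f1 : (p.1.factorial : ℝ) ≠ 0 := Nat.cast_ne_zero.2 (Nat.factorial_ne_zero _)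
    have f2 : (p.2.factorial : ℝ) ≠ 0 := Nat.cast_ne_zero.2 (Nat.factorial_ne_zero _)
    have f3 : ((n - k * p.2).factorial : ℝ) ≠ 0 := Nat.cast_ne_zero.2 (Nat.factorial_ne_zero _)
    field_simp

/-- Rising factorial (Pochhammer symbol) `x^(n) = x(x+1)⋯(x+n-1)`. -/
noncomputable def risingFact (x : ℝ) (n : ℕ) : ℝ := (ascPochhammer ℝ n).eval x

/-- `γ_i = (∏_r a_r^{(i)}) / (∏_s b_s^{(i)})`. -/
noncomputable def ghGamma {p q : ℕ} (a : Fin p → ℝ) (b : Fin q → ℝ) (i : ℕ) : ℝ :=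
  (∏ r, risingFact (a r) i) / (∏ s, risingFact (b s) i)

/-- The generalized hypergeometric Appell polynomial `A_n^{(k)}(m,x)` (as a function of `x`). -/
noncomputable def ghAppell {p q : ℕ} (a : Fin p → ℝ) (b : Fin q → ℝ)
    (k : ℕ) (m : ℝ) (n : ℕ) (x : ℝ) : ℝ :=
  ∑ i ∈ Finset.range (n / k + 1),
    ((n.factorial : ℝ) / (i.factorial * (n - k * i).factorial)) * ghGamma a b i *
      ((-1) ^ (k * i) * m ^ i / (k : ℝ) ^ (k * i)) * x ^ (n - k * i)

/-- The Gould–Hopper polynomial `g_n^k(x,h) = ∑_{i=0}^{⌊n/k⌋} (n!/(i!(n−ki)!)) h^i x^{n−ki}`. -/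
noncomputable def gouldHopper (k : ℕ) (h : ℝ) (n : ℕ) (x : ℝ) : ℝ :=
  ∑ i ∈ Finset.range (n / k + 1),
    ((n.factorial : ℝ) / (i.factorial * (n - k * i).factorial)) * h ^ i * x ^ (n - k * i)

/-- The formal exponential of a power series `f` with zero constant term:
the `n`-th coefficient of `exp f` is `∑_{j=0}^{n} (coeff n (f^j))/j!`. -/
noncomputable def expPS (f : PowerSeries ℝ) : PowerSeries ℝ :=
  PowerSeries.mk fun n =>
    ∑ j ∈ Finset.range (n + 1), PowerSeries.coeff n (f ^ j) / j.factorial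

/-- Gould–Hopper special case: with `p = q = 0` and `m = (−1)^k h k^k`,
`A_n^{(k)}(m,x) = g_n^k(x,h)`, and `exp(xt + h t^k) = ∑_n g_n^k(x,h) t^n/n!` in `ℝ[[t]]`. -/
theorem ghAppell_gouldHopper (k : ℕ) (hk : 1 ≤ k) (h : ℝ) :
    (∀ (n : ℕ) (x : ℝ),
        ghAppell (Fin.elim0 : Fin 0 → ℝ) (Fin.elim0 : Fin 0 → ℝ) k
            ((-1) ^ k * h * (k : ℝ) ^ k) n x = gouldHopper k h n x) ∧
      ∀ x : ℝ,
        expPS (PowerSeries.C x * PowerSeries.X + PowerSeries.C h * PowerSeries.X ^ k) =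
          PowerSeries.mk fun n => gouldHopper k h n x / n.factorial := by
  constructor
  · intro n x
    unfold ghAppell gouldHopper ghGamma
    refine Finset.sum_congr rfl fun i _ => ?_
    have hk0 : (k : ℝ) ≠ 0 := Nat.cast_ne_zero.2 (by omega)
    have key : ((-1 : ℝ)) ^ (k * i) * ((-1) ^ k * h * (k : ℝ) ^ k) ^ i / (k : ℝ) ^ (k * i) = h ^ i := by
      rw [mul_pow, mul_pow, ← pow_mul, ← pow_mul,
        div_eq_iff (pow_ne_zero _ hk0)]
      have e1 : ((-1 : ℝ)) ^ (k * i) * ((-1 : ℝ)) ^ (k * i) = 1 := by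
        rw [← pow_add]
        exact Even.neg_one_pow ⟨k * i, rfl⟩
      calc ((-1 : ℝ)) ^ (k * i) * ((-1 : ℝ) ^ (k * i) * h ^ i * (k : ℝ) ^ (k * i))
          = ((-1 : ℝ)) ^ (k * i) * ((-1 : ℝ)) ^ (k * i) * (h ^ i * (k : ℝ) ^ (k * i)) := by ring
        _ = h ^ i * (k : ℝ) ^ (k * i) := by rw [e1, one_mul]
    rw [key]
    simp
  · intro x
    ext n
    rw [expPS, PowerSeries.coeff_mk, PowerSeries.coeff_mk, exp_sum_eq k hk h x n,
      gouldHopper, Finset.sum_div]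
    refine Finset.sum_congr rfl fun i hi => ?_
    have f1 : (n.factorial : ℝ) ≠ 0 := Nat.cast_ne_zero.2 (Nat.factorial_ne_zero _)
    have f2 : (i.factorial : ℝ) ≠ 0 := Nat.cast_ne_zero.2 (Nat.factorial_ne_zero _)
    have f3 : ((n - k * i).factorial : ℝ) ≠ 0 := Nat.cast_ne_zero.2 (Nat.factorial_ne_zero _)
    field_simp
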